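/- Let K be a valued field of characteristic zero whose valuation ring K° is a Henselian local ring. Let f(Y) = a_0 + a_1·Y + … + a_m·Y^m be a polynomial over K, let n be a positive integer, and let x ∈ K be nonzero. Assume there exists an index i₀ with 1 ≤ i₀ ≤ m such that: (1) v(a_{i₀})·v(x)^{i₀} ≥ v(a_i)·v(x)^i for all 0 ≤ i ≤ m (i.e., ord(a_{i₀}x^{i₀}) is minimal among the ord(a_i x^i)); (2) v(f(x)) < v(n)²·v(a_{i₀})·v(x)^{i₀} (i.e., ord f(x) > ord(n² a_{i₀} x^{i₀})); (3) v(f'(x)) ≥ v(n)·v(a_{i₀})·v(x)^{i₀−1} (i.e., ord f'(x) ≤ ord(n a_{i₀} x^{i₀−1})), where f' is the derivative of f. Then there exists a unique y₀ ∈ K with f(y₀) = 0 and v(y₀ − x) < v(n)·v(x) (i.e., rv_n(y₀) = rv_n(x)). -/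

import Mathlib

open Polynomial

section HenselHelpers

open Finset

variable {K : Type*} [Field K] {Γ₀ : Type*} [LinearOrderedCommGroupWithZero Γ₀]
  (v : Valuation K Γ₀)


lemma hl_val_natCast_le_one (n : ℕ) : v (n : K) ≤ 1 := by
  induction n with
  | zero => simp
  | succ n ih =>
    push_cast
    exact le_trans (v.map_add _ _) (max_le ih (le_of_eq v.map_one))

lemma hl_val_eval_le_one {F : K[X]} (hF : ∀ i, v (F.coeff i) ≤ 1) {t : K} (ht : v t ≤ 1) :
    v (F.eval t) ≤ 1 := by
  rw [eval_eq_sum_range]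
  refine v.map_sum_le fun i _ => ?_
  rw [v.map_mul, v.map_pow]
  exact mul_le_one' (hF i) (pow_le_one' ht i)

lemma hl_val_derivative_coeff {F : K[X]} (hF : ∀ i, v (F.coeff i) ≤ 1) (i : ℕ) :
    v (F.derivative.coeff i) ≤ 1 := by
  rw [coeff_derivative, v.map_mul]
  refine mul_le_one' (hF _) ?_
  have := hl_val_natCast_le_one v (i + 1)
  push_cast at this ⊢
  exact this

lemma hl_val_taylor_coeff {F : K[X]} (hF : ∀ i, v (F.coeff i) ≤ 1) {t : K} (ht : v t ≤ 1)
    (k : ℕ) : v ((taylor t F).coeff k) ≤ 1 := by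
  rw [taylor_coeff]
  refine hl_val_eval_le_one v (fun i => ?_) ht
  rw [hasseDeriv_coeff, v.map_mul]
  exact mul_le_one' (hl_val_natCast_le_one v _) (hF _)

lemma hl_val_eval_sub {F : K[X]} (hF : ∀ i, v (F.coeff i) ≤ 1) {t s : K} (ht : v t ≤ 1)
    (hst : v (s - t) ≤ 1) : v (F.eval s - F.eval t) ≤ v (s - t) := by
  have h1 : F.eval s = ∑ k ∈ Finset.range (F.natDegree + 1),
      (taylor t F).coeff k * (s - t) ^ k := by
    rw [← taylor_eval_sub t F s, eval_eq_sum_range, natDegree_taylor]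
  rw [h1, Finset.sum_range_succ', taylor_coeff_zero, pow_zero, mul_one, add_sub_cancel_right]
  refine v.map_sum_le fun i _ => ?_
  rw [v.map_mul, v.map_pow, pow_succ]
  calc v ((taylor t F).coeff (i+1)) * (v (s-t) ^ i * v (s-t))
      ≤ 1 * (1 * v (s - t)) := by
        gcongr
        · exact hl_val_taylor_coeff v hF ht _
        · exact pow_le_one' hst i
    _ = v (s - t) := by rw [one_mul, one_mul]

lemma hl_mem_max_iff [IsLocalRing v.integer] (a : v.integer) :
    a ∈ IsLocalRing.maximalIdeal v.integer ↔ v (a : K) < 1 := by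
  rw [IsLocalRing.mem_maximalIdeal, mem_nonunits_iff,
    (Valuation.integer.integers v).isUnit_iff_valuation_eq_one]
  have h1 : v ((algebraMap v.integer K) a) ≤ 1 := a.2
  rw [show ((algebraMap v.integer K) a) = (a : K) from rfl] at h1 ⊢
  exact ⟨fun h => lt_of_le_of_ne h1 h, fun h => ne_of_lt h⟩

lemma hl_isUnit_of_val_one (a : v.integer) (h : v (a : K) = 1) : IsUnit a :=
  (Valuation.integer.integers v).isUnit_of_one'
    (by rw [show ((algebraMap v.integer K) a) = (a : K) from rfl]; exact h)

lemma hl_coe_eval (Q : K[X]) (h : (↑Q.coeffs : Set K) ⊆ v.integer) (r : v.integer) :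
    (((Q.toSubring v.integer h).eval r : v.integer) : K) = Q.eval (r : K) := by
  conv_rhs => rw [← Polynomial.map_toSubring Q v.integer h]
  rw [eval_map, show ((r : K)) = (v.integer.subtype r) from rfl, eval₂_at_apply]
  rfl

lemma hl_coe_deriv_eval (Q : K[X]) (h : (↑Q.coeffs : Set K) ⊆ v.integer) (r : v.integer) :
    (((Q.toSubring v.integer h).derivative.eval r : v.integer) : K)
      = Q.derivative.eval (r : K) := by
  have h2 : Q.derivative = ((Q.toSubring v.integer h).derivative).map v.integer.subtype := by
    rw [← derivative_map, Polynomial.map_toSubring]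
  rw [h2, eval_map, show ((r : K)) = (v.integer.subtype r) from rfl, eval₂_at_apply]
  rfl

/-- Strong Hensel's lemma over a henselian valued field. -/
lemma hl_strong_hensel (hhens : HenselianLocalRing v.integer)
    (F : K[X]) (hF : ∀ i, v (F.coeff i) ≤ 1) (t : K) (ht : v t ≤ 1)
    (hlt : v (F.eval t) < v (F.derivative.eval t) ^ 2) :
    ∃ s : K, F.eval s = 0 ∧ v (s - t) * v (F.derivative.eval t) ≤ v (F.eval t) := by
  haveI := hhens
  by_cases h0 : F.eval t = 0
  · exact ⟨t, h0, by simp [h0]⟩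
  have hva : v (F.eval t) ≠ 0 := by simpa using h0
  have hve : v (F.derivative.eval t) ≠ 0 := by
    intro h
    rw [h] at hlt
    simp at hlt
  have he0 : F.derivative.eval t ≠ 0 := by simpa using hve
  have hve1 : v (F.derivative.eval t) ≤ 1 :=
    hl_val_eval_le_one v (hl_val_derivative_coeff v hF) ht
  -- the degree is at least 1
  obtain ⟨m, hm⟩ : ∃ m, F.natDegree = m + 1 := by
    have hne : F.natDegree ≠ 0 := fun h =>
      he0 (by rw [show F = C (F.coeff 0) from eq_C_of_natDegree_eq_zero h]; simp)
    exact ⟨F.natDegree - 1, by omega⟩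
  set a₀ : K := F.eval t with ha₀def
  set e : K := F.derivative.eval t with hedef
  set w : K := a₀ / e with hwdef
  have hvw : v w = v a₀ / v e := by rw [hwdef, v.map_div]
  set D : ℕ → K := fun k => (taylor t F).coeff k with hDdef
  have hD0 : D 0 = a₀ := taylor_coeff_zero t F
  have hD1 : D 1 = e := taylor_coeff_one t F
  have hDint : ∀ k, v (D k) ≤ 1 := hl_val_taylor_coeff v hF ht
  set G : ℕ → K := fun k => D k * w ^ k / a₀ with hGdef
  have hG0 : G 0 = 1 := by
    simp only [hGdef, hD0, pow_zero, mul_one]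
    exact div_self h0
  have hG1 : G 1 = 1 := by
    simp only [hGdef, hD1, pow_one, hwdef]
    field_simp
  have hGlt : ∀ k, 2 ≤ k → v (G k) < 1 := by
    intro k hk
    obtain ⟨j, rfl⟩ : ∃ j, k = j + 2 := ⟨k - 2, by omega⟩
    have hGeq : G (j + 2) = D (j + 2) * ((a₀ / e ^ 2) ^ (j + 1) * e ^ j) := by
      simp only [hGdef, hwdef]
      field_simp
      have hee : e ^ j * e⁻¹ ^ j = 1 := by rw [← mul_pow, mul_inv_cancel₀ he0, one_pow]
      linear_combination (-(D (j + 2) * a₀ ^ (j + 2) * e⁻¹ ^ (j + 2))) * hee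
    rw [hGeq, v.map_mul, v.map_mul, v.map_pow, v.map_pow]
    have hu : v (a₀ / e ^ 2) < 1 := by
      rw [v.map_div, v.map_pow]
      have hpos : (0:Γ₀) < v e ^ 2 := by
        rw [zero_lt_iff]
        exact pow_ne_zero _ hve
      exact (div_lt_iff₀ hpos).mpr (by rwa [one_mul])
    calc v (D (j+2)) * (v (a₀ / e^2) ^ (j+1) * v e ^ j)
        ≤ 1 * (v (a₀ / e^2) ^ (j+1) * 1) := by
          gcongr
          · exact hDint _
          · exact pow_le_one' hve1 j
      _ = v (a₀ / e^2) ^ (j+1) := by rw [one_mul, mul_one]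
      _ < 1 := pow_lt_one₀ zero_le' hu (by omega)
  have hGle : ∀ k, v (G k) ≤ 1 := by
    intro k
    match k, hGlt with
    | 0, _ => rw [hG0, v.map_one]
    | 1, _ => rw [hG1, v.map_one]
    | (j+2), h => exact le_of_lt (h (j+2) (by omega))
  -- The reversed polynomial Q
  set Q : K[X] := ∑ k ∈ Finset.range (m + 2), C (G k) * X ^ (m + 1 - k) with hQdef
  have hQeval : ∀ r : K, Q.eval r = ∑ k ∈ Finset.range (m + 2), G k * r ^ (m + 1 - k) := by
    intro r
    rw [hQdef, eval_finset_sum]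
    simp [eval_mul, eval_pow]
  have hQcoeff : ∀ i, Q.coeff i
      = ∑ k ∈ Finset.range (m + 2), if i = m + 1 - k then G k else 0 := by
    intro i
    rw [hQdef, finset_sum_coeff]
    refine Finset.sum_congr rfl fun k _ => ?_
    rw [coeff_C_mul, coeff_X_pow]
    simp [mul_ite]
  have hQtop : Q.coeff (m + 1) = 1 := by
    rw [hQcoeff]
    rw [Finset.sum_eq_single 0]
    · simp [hG0]
    · intro k hk hkne
      have h2 : ¬ (m + 1 = m + 1 - k) := by
        simp only [Finset.mem_range] at hk
        omega
      simp [h2]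
    · simp
  have hQdeg : Q.natDegree ≤ m + 1 := by
    rw [hQdef]
    refine natDegree_sum_le_of_forall_le _ _ fun k hk => ?_
    refine le_trans (natDegree_C_mul_le _ _) ?_
    simpa using Nat.sub_le (m + 1) k
  have hQmonic : Q.Monic := monic_of_natDegree_le_of_coeff_eq_one (m + 1) hQdeg hQtop
  have hQint : (↑Q.coeffs : Set K) ⊆ v.integer := by
    intro z hz
    rw [Finset.mem_coe, mem_coeffs_iff] at hz
    obtain ⟨i, hi, rfl⟩ := hz
    rw [SetLike.mem_coe, Valuation.mem_integer_iff, hQcoeff]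
    refine v.map_sum_le fun k _ => ?_
    split
    · exact hGle k
    · simp
  set QR := Q.toSubring v.integer hQint with hQRdef
  have hQRmonic : QR.Monic := (monic_toSubring _ _ _).mpr hQmonic
  have hcoe_neg1 : (((-1 : v.integer) : K)) = -1 := by push_cast; ring
  have hq1 : QR.eval (-1) ∈ IsLocalRing.maximalIdeal v.integer := by
    rw [hl_mem_max_iff, hQRdef, hl_coe_eval, hcoe_neg1, hQeval]
    rw [Finset.sum_range_succ' _ (m + 1), Finset.sum_range_succ' _ m]
    have hcancel : G 1 * (-1 : K) ^ (m + 1 - 1) + G 0 * (-1) ^ (m + 1 - 0) = 0 := by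
      rw [hG0, hG1]
      simp [pow_succ]
    rw [add_assoc, hcancel, add_zero]
    refine v.map_sum_lt one_ne_zero fun i _ => ?_
    rw [v.map_mul, v.map_pow, v.map_neg, v.map_one, one_pow, mul_one]
    exact hGlt (i + 2) (by omega)
  have hq2 : IsUnit (QR.derivative.eval (-1)) := by
    refine hl_isUnit_of_val_one v _ ?_
    rw [hQRdef, hl_coe_deriv_eval, hcoe_neg1]
    have hQder : Q.derivative.eval (-1 : K)
        = ∑ k ∈ Finset.range (m + 2),
            G k * ((m + 1 - k : ℕ) : K) * (-1) ^ (m + 1 - k - 1) := by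
      rw [hQdef, derivative_sum, eval_finset_sum]
      refine Finset.sum_congr rfl fun k _ => ?_
      rw [derivative_C_mul_X_pow, eval_mul, eval_C, eval_pow, eval_X, mul_assoc]
    rw [hQder, Finset.sum_range_succ' _ (m + 1), Finset.sum_range_succ' _ m, add_assoc]
    have hS01 : v (G 1 * ((m + 1 - 1 : ℕ) : K) * (-1) ^ (m + 1 - 1 - 1)
        + G 0 * ((m + 1 - 0 : ℕ) : K) * (-1) ^ (m + 1 - 0 - 1)) = 1 := by
      rw [hG0, hG1, one_mul, one_mul]
      rcases m with _ | j
      · norm_num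
      · have h7 : ((j + 1 + 1 - 1 : ℕ) : K) * (-1) ^ (j + 1 + 1 - 1 - 1)
            + ((j + 1 + 1 - 0 : ℕ) : K) * (-1) ^ (j + 1 + 1 - 0 - 1)
            = (-1 : K) ^ (j + 1) := by
          simp only [Nat.sub_zero, Nat.add_sub_cancel]
          push_cast
          rw [pow_succ]
          ring
        rw [h7, v.map_pow, v.map_neg, v.map_one, one_pow]
    have hrest : v (∑ i ∈ Finset.range m,
        G (i + 2) * ((m + 1 - (i + 2) : ℕ) : K) * (-1 : K) ^ (m + 1 - (i + 2) - 1)) < 1 := by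
      refine v.map_sum_lt one_ne_zero fun i _ => ?_
      rw [v.map_mul, v.map_mul, v.map_pow, v.map_neg, v.map_one, one_pow, mul_one]
      calc v (G (i + 2)) * v ((m + 1 - (i + 2) : ℕ) : K) ≤ v (G (i + 2)) * 1 := by
            gcongr
            exact hl_val_natCast_le_one v _
        _ < 1 := by rw [mul_one]; exact hGlt (i + 2) (by omega)
    rw [v.map_add_eq_of_lt_right (by rw [hS01]; exact hrest)]
    exact hS01
  obtain ⟨w₀, hw₀root, hw₀near⟩ := hhens.is_henselian QR hQRmonic (-1) hq1 hq2
  have hW : v ((w₀ : K) + 1) < 1 := by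
    have h8 := (hl_mem_max_iff v _).mp hw₀near
    have h9 : ((w₀ - (-1) : v.integer) : K) = (w₀ : K) + 1 := by push_cast; ring
    rwa [h9] at h8
  have hvw₀ : v (w₀ : K) = 1 := by
    have h1 : ((w₀ : K)) = -1 + ((w₀ : K) + 1) := by ring
    rw [h1, v.map_add_eq_of_lt_left (by rwa [v.map_neg, v.map_one])]
    rw [v.map_neg, v.map_one]
  have hw₀ne : (w₀ : K) ≠ 0 := by
    intro h
    rw [h, v.map_zero] at hvw₀
    exact zero_ne_one hvw₀
  have hQw₀ : Q.eval ((w₀ : K)) = 0 := by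
    rw [← hl_coe_eval v Q hQint w₀]
    norm_cast
  have hsum0 : ∑ k ∈ Finset.range (m + 2), G k * (w₀ : K) ^ (m + 1 - k) = 0 := by
    rw [← hQeval]; exact hQw₀
  refine ⟨t + w / (w₀ : K), ?_, ?_⟩
  · have h10 : F.eval (t + w / (w₀ : K))
        = ∑ k ∈ Finset.range (m + 2), D k * (w / (w₀ : K)) ^ k := by
      rw [show t + w / (w₀ : K) = w / (w₀ : K) + t from by ring, ← taylor_eval,
        eval_eq_sum_range, natDegree_taylor, hm]
    rw [h10]
    have h11 : ∀ k ∈ Finset.range (m + 2), D k * (w / (w₀ : K)) ^ k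
        = (a₀ * ((w₀ : K)⁻¹) ^ (m + 1)) * (G k * (w₀ : K) ^ (m + 1 - k)) := by
      intro k hk
      simp only [Finset.mem_range] at hk
      obtain ⟨j, hj⟩ : ∃ j, m + 1 = k + j := ⟨m + 1 - k, by omega⟩
      rw [show m + 1 - k = j from by omega, hj, hGdef]
      rw [div_pow, pow_add, inv_pow]
      field_simp
      have hww : (w₀ : K) ^ j * (w₀ : K)⁻¹ ^ j = 1 := by
        rw [← mul_pow, mul_inv_cancel₀ hw₀ne, one_pow]
      linear_combination (-(D k * w ^ k)) * hww
    rw [Finset.sum_congr rfl h11, ← Finset.mul_sum, hsum0, mul_zero]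
  · have h12 : t + w / (w₀ : K) - t = w / (w₀ : K) := by ring
    rw [h12, v.map_div, hvw₀, div_one, hvw]
    rw [div_mul_cancel₀ _ hve]

lemma hl_root_unique (F : K[X]) (hF : ∀ i, v (F.coeff i) ≤ 1) (t : K) (ht : v t ≤ 1)
    {s₁ s₂ : K} (h₁ : F.eval s₁ = 0) (h₂ : F.eval s₂ = 0)
    (hs₁ : v (s₁ - t) < v (F.derivative.eval t))
    (hs₂ : v (s₂ - t) < v (F.derivative.eval t)) :
    s₁ = s₂ := by
  have hve : v (F.derivative.eval t) ≠ 0 := by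
    intro h
    rw [h] at hs₁
    simp at hs₁
  have he0 : F.derivative.eval t ≠ 0 := by simpa using hve
  have hve1 : v (F.derivative.eval t) ≤ 1 :=
    hl_val_eval_le_one v (hl_val_derivative_coeff v hF) ht
  obtain ⟨m, hm⟩ : ∃ m, F.natDegree = m + 1 := by
    have hne : F.natDegree ≠ 0 := fun h =>
      he0 (by rw [show F = C (F.coeff 0) from eq_C_of_natDegree_eq_zero h]; simp)
    exact ⟨F.natDegree - 1, by omega⟩
  have hvs₂ : v s₂ ≤ 1 := by
    rw [show s₂ = t + (s₂ - t) from by ring]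
    exact le_trans (v.map_add _ _) (max_le ht (le_trans hs₂.le hve1))
  have hε : v (s₁ - s₂) < v (F.derivative.eval t) := by
    rw [show s₁ - s₂ = (s₁ - t) - (s₂ - t) from by ring]
    exact lt_of_le_of_lt (v.map_sub _ _) (max_lt hs₁ hs₂)
  have hε1 : v (s₁ - s₂) ≤ 1 := le_trans hε.le hve1
  have hder : v (F.derivative.eval s₂) = v (F.derivative.eval t) := by
    have hsub : v (F.derivative.eval s₂ - F.derivative.eval t) ≤ v (s₂ - t) :=
      hl_val_eval_sub v (hl_val_derivative_coeff v hF) ht (le_trans hs₂.le hve1)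
    rw [show F.derivative.eval s₂
      = F.derivative.eval t + (F.derivative.eval s₂ - F.derivative.eval t) from by ring,
      v.map_add_eq_of_lt_left (lt_of_le_of_lt hsub hs₂)]
  by_contra hne
  have hεne : s₁ - s₂ ≠ 0 := sub_ne_zero.mpr hne
  have h1 : (0 : K) = ∑ k ∈ Finset.range (F.natDegree + 1),
      (taylor s₂ F).coeff k * (s₁ - s₂) ^ k := by
    rw [← h₁, ← taylor_eval_sub s₂ F s₁, eval_eq_sum_range, natDegree_taylor]
  rw [Finset.sum_range_succ', taylor_coeff_zero, h₂, pow_zero, mul_one, add_zero, hm] at h1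
  have h2 : ∑ i ∈ Finset.range (m + 1), (taylor s₂ F).coeff (i + 1) * (s₁ - s₂) ^ (i + 1)
      = (s₁ - s₂) * ∑ i ∈ Finset.range (m + 1),
          (taylor s₂ F).coeff (i + 1) * (s₁ - s₂) ^ i := by
    rw [Finset.mul_sum]
    refine Finset.sum_congr rfl fun i _ => ?_
    rw [pow_succ]
    ring
  rw [h2] at h1
  have hB : ∑ i ∈ Finset.range (m + 1), (taylor s₂ F).coeff (i + 1) * (s₁ - s₂) ^ i = 0 := by
    rcases mul_eq_zero.mp h1.symm with h | h
    · exact absurd h hεne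
    · exact h
  rw [Finset.sum_range_succ'] at hB
  -- hB : rest + T 1 * ε^0 = 0
  rw [pow_zero, mul_one, taylor_coeff_one] at hB
  have hrest : v (∑ i ∈ Finset.range m,
      (taylor s₂ F).coeff (i + 1 + 1) * (s₁ - s₂) ^ (i + 1)) < v (F.derivative.eval s₂) := by
    rw [hder]
    refine lt_of_le_of_lt (v.map_sum_le fun i _ => ?_) hε
    rw [v.map_mul, v.map_pow, pow_succ]
    calc v ((taylor s₂ F).coeff (i + 1 + 1)) * (v (s₁ - s₂) ^ i * v (s₁ - s₂))
        ≤ 1 * (1 * v (s₁ - s₂)) := by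
          gcongr
          · exact hl_val_taylor_coeff v hF hvs₂ _
          · exact pow_le_one' hε1 i
      _ = v (s₁ - s₂) := by rw [one_mul, one_mul]
  have : v (∑ i ∈ Finset.range m,
      (taylor s₂ F).coeff (i + 1 + 1) * (s₁ - s₂) ^ (i + 1) + F.derivative.eval s₂)
      = v (F.derivative.eval s₂) := v.map_add_eq_of_lt_right hrest
  rw [hB, v.map_zero] at this
  rw [hder] at this
  exact hve this.symm

lemma hl_coeff_comp (p : K[X]) (x : K) (i : ℕ) :
    (p.comp (C x * X)).coeff i = p.coeff i * x ^ i := by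
  classical
  rw [comp_eq_sum_left, Polynomial.sum_def, finset_sum_coeff]
  have h : ∀ n, (C (p.coeff n) * (C x * X) ^ n).coeff i
      = if i = n then p.coeff n * x ^ n else 0 := by
    intro n
    rw [mul_pow, ← C_pow, ← mul_assoc, ← C_mul, coeff_C_mul, coeff_X_pow]
    simp only [mul_ite, mul_one, mul_zero]
  rw [Finset.sum_congr rfl fun n _ => h n, Finset.sum_ite_eq]
  split
  · rfl
  · next hns =>
    rw [notMem_support_iff.mp hns, zero_mul]

end HenselHelpers

/-- Hensel-type lemma (Lemma 7.13 / `hm` in the paper, existence-uniqueness part):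
in a Henselian valued field of characteristic zero, under the stated conditions on the
valuations of `f(x)`, `f'(x)` and the terms `aᵢ xⁱ`, there is a unique root `y₀` of `f`
with `rv_n(y₀) = rv_n(x)`, i.e. `v (y₀ - x) < v n * v x`. -/
theorem hensel_lemma_unique_root
    {K : Type*} [Field K] [CharZero K]
    {Γ₀ : Type*} [LinearOrderedCommGroupWithZero Γ₀]
    (v : Valuation K Γ₀) (hhens : HenselianLocalRing v.integer)
    (f : K[X]) (n : ℕ) (hn : 0 < n) (x : K) (hx : x ≠ 0)
    (i₀ : ℕ) (hi₀1 : 1 ≤ i₀) (hi₀m : i₀ ≤ f.natDegree)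
    (hmin : ∀ i ≤ f.natDegree, v (f.coeff i) * v x ^ i ≤ v (f.coeff i₀) * v x ^ i₀)
    (hfx : v (f.eval x) < v (n : K) ^ 2 * (v (f.coeff i₀) * v x ^ i₀))
    (hfx' : v (n : K) * (v (f.coeff i₀) * v x ^ (i₀ - 1)) ≤ v (f.derivative.eval x)) :
    ∃! y₀ : K, f.eval y₀ = 0 ∧ v (y₀ - x) < v (n : K) * v x := by
  haveI := hhens
  set c : K := f.coeff i₀ * x ^ i₀ with hcdef
  have hvx : v x ≠ 0 := by simpa using hx
  have hRHS : v (n : K) ^ 2 * (v (f.coeff i₀) * v x ^ i₀) ≠ 0 :=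
    ne_of_gt (lt_of_le_of_lt zero_le' hfx)
  have hvn : v (n : K) ≠ 0 := by
    intro h
    apply hRHS
    rw [h, zero_pow two_ne_zero, zero_mul]
  have hva : v (f.coeff i₀) ≠ 0 := by
    intro h
    apply hRHS
    rw [h, zero_mul, mul_zero]
  have hvc : v c = v (f.coeff i₀) * v x ^ i₀ := by rw [hcdef, v.map_mul, v.map_pow]
  have hvcne : v c ≠ 0 := by
    rw [hvc]
    exact mul_ne_zero hva (pow_ne_zero _ hvx)
  have hvcpos : (0 : Γ₀) < v c := zero_lt_iff.mpr hvcne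
  have hcne : c ≠ 0 := by simpa using hvcne
  have hvn1 : v (n : K) ≤ 1 := hl_val_natCast_le_one v n
  -- the normalized polynomial
  set g : K[X] := C c⁻¹ * (f.comp (C x * X)) with hgdef
  have hgcoeff : ∀ i, g.coeff i = c⁻¹ * (f.coeff i * x ^ i) := by
    intro i
    rw [hgdef, coeff_C_mul, hl_coeff_comp]
  have hgint : ∀ i, v (g.coeff i) ≤ 1 := by
    intro i
    rw [hgcoeff, v.map_mul, v.map_inv, ← div_eq_inv_mul, div_le_one₀ hvcpos, hvc,
      v.map_mul, v.map_pow]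
    rcases le_or_gt i f.natDegree with h | h
    · exact hmin i h
    · rw [coeff_eq_zero_of_natDegree_lt h]
      simp
  have heval : ∀ s : K, g.eval s = c⁻¹ * f.eval (x * s) := by
    intro s
    rw [hgdef, eval_mul, eval_C, eval_comp, eval_mul, eval_C, eval_X]
  have hgder : g.derivative = C c⁻¹ * (C x * f.derivative.comp (C x * X)) := by
    rw [hgdef, derivative_C_mul, derivative_comp, derivative_C_mul, derivative_X, mul_one]
  have hg'eval : ∀ s : K, g.derivative.eval s = c⁻¹ * (x * f.derivative.eval (x * s)) := by
    intro s
    rw [hgder, eval_mul, eval_C, eval_mul, eval_C, eval_comp, eval_mul, eval_C, eval_X]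
  have hg1 : v (g.eval 1) < v (n : K) ^ 2 := by
    rw [heval 1, mul_one, v.map_mul, v.map_inv, ← div_eq_inv_mul, div_lt_iff₀ hvcpos, hvc]
    exact hfx
  have hg'1 : v (n : K) ≤ v (g.derivative.eval 1) := by
    rw [hg'eval 1, mul_one, v.map_mul, v.map_inv, ← div_eq_inv_mul, le_div_iff₀ hvcpos,
      hvc, v.map_mul]
    calc v (n : K) * (v (f.coeff i₀) * v x ^ i₀)
        = (v (n : K) * (v (f.coeff i₀) * v x ^ (i₀ - 1))) * v x := by
          rw [← pow_sub_mul_pow (v x) hi₀1, pow_one]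
          simp [mul_assoc]
      _ ≤ v (f.derivative.eval x) * v x := mul_le_mul_left hfx' (v x)
      _ = v x * v (f.derivative.eval x) := mul_comm _ _
  have hg'ne : v (g.derivative.eval 1) ≠ 0 := fun h => hvn (le_antisymm (h ▸ hg'1) zero_le')
  have hlt : v (g.eval 1) < v (g.derivative.eval 1) ^ 2 :=
    lt_of_lt_of_le hg1 (pow_le_pow_left' hg'1 2)
  obtain ⟨s, hs0, hsle⟩ := hl_strong_hensel v hhens g hgint 1 (le_of_eq (v.map_one)) hlt
  have hfs : f.eval (x * s) = 0 := by
    have h1 := heval s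
    rw [hs0] at h1
    have := h1.symm
    rcases mul_eq_zero.mp this with h | h
    · exact absurd h (inv_ne_zero hcne)
    · exact h
  have hsv : v (s - 1) < v (n : K) := by
    have h2 : v (s - 1) * v (g.derivative.eval 1) < v (n : K) * v (g.derivative.eval 1) := by
      calc v (s - 1) * v (g.derivative.eval 1) ≤ v (g.eval 1) := hsle
        _ < v (n : K) ^ 2 := hg1
        _ ≤ v (n : K) * v (g.derivative.eval 1) := by
            rw [pow_two]
            exact mul_le_mul_right hg'1 _
    exact lt_of_mul_lt_mul_right h2 zero_le'
  -- a helper for uniqueness: any root near x comes from a root of g near 1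
  have key : ∀ y : K, f.eval y = 0 → v (y - x) < v (n : K) * v x → y / x = s := by
    intro y hy0 hyv
    have hyx : x * (y / x) = y := by field_simp
    have hroot : g.eval (y / x) = 0 := by
      rw [heval, hyx, hy0, mul_zero]
    have hynear : v (y / x - 1) < v (n : K) := by
      have h3 : y / x - 1 = (y - x) / x := by field_simp
      rw [h3, v.map_div, div_lt_iff₀ (zero_lt_iff.mpr hvx)]
      exact hyv
    refine hl_root_unique v g hgint 1 (le_of_eq v.map_one) hroot hs0 ?_ ?_
    · exact lt_of_lt_of_le hynear hg'1
    · exact lt_of_lt_of_le hsv hg'1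
  refine ⟨x * s, ⟨hfs, ?_⟩, ?_⟩
  · have h4 : x * s - x = x * (s - 1) := by ring
    rw [h4, v.map_mul, mul_comm (v (n : K)) (v x)]
    exact mul_lt_mul_of_pos_left hsv (zero_lt_iff.mpr hvx)
  · intro y hy
    obtain ⟨hy0, hyv⟩ := hy
    have h5 := key y hy0 hyv
    calc y = x * (y / x) := by field_simp
      _ = x * s := by rw [h5]
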